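/- Counting bound for multi-indices: for all K, N ∈ ℕ and 0 ≤ r ≤ K, the number w_{K,N}(r) of multi-indices (i_1,…,i_K) ∈ {1,…,N}^K in which exactly r distinct index values occur exactly once satisfies w_{K,N}(r) ≤ K! · N^{(K+r)/2}. -/
import Mathlib

open Finset

/-- Number of occurrences of the index value `j` in the multi-index `i`. -/
def occCount {K N : ℕ} (i : Fin K → Fin N) (j : Fin N) : ℕ :=
  (Finset.univ.filter fun ν : Fin K => i ν = j).card

/-- Number of distinct index values occurring exactly once in the multi-index `i`. -/
def singleCount {K N : ℕ} (i : Fin K → Fin N) : ℕ :=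
  (Finset.univ.filter fun j : Fin N => occCount i j = 1).card

lemma pow_self_le_fact_mul_fact (m : ℕ) : m ^ m ≤ m.factorial * m.factorial := by
  have h1 : m.factorial * m.factorial
      = ∏ k ∈ Finset.range m, ((k + 1) * (m - k)) := by
    rw [Finset.prod_mul_distrib, Finset.prod_range_add_one_eq_factorial]
    congr 1
    have := Finset.prod_range_reflect (fun j => j + 1) m
    rw [Finset.prod_range_add_one_eq_factorial] at this
    rw [← this]
    apply Finset.prod_congr rfl
    intro k hk
    simp only [Finset.mem_range] at hk
    omega
  calc m ^ m = ∏ _k ∈ Finset.range m, m := by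
        rw [Finset.prod_const, Finset.card_range]
    _ ≤ ∏ k ∈ Finset.range m, ((k + 1) * (m - k)) := by
        apply Finset.prod_le_prod'
        intro k hk
        simp only [Finset.mem_range] at hk
        obtain ⟨d, hd⟩ : ∃ d, m = k + 1 + d := ⟨m - (k + 1), by omega⟩
        subst hd
        have h' : k + 1 + d - k = 1 + d := by omega
        rw [h']
        nlinarith
    _ = m.factorial * m.factorial := h1.symm

lemma pow_le_fact_mul_fact {m K : ℕ} (h : m ≤ K) :
    m ^ K ≤ K.factorial * m.factorial := by
  induction K, h using Nat.le_induction with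
  | base => exact pow_self_le_fact_mul_fact m
  | succ K hK ih =>
    calc m ^ (K + 1) = m * m ^ K := by ring
      _ ≤ (K + 1) * (K.factorial * m.factorial) := by
          exact Nat.mul_le_mul (by omega) ih
      _ = (K + 1).factorial * m.factorial := by rw [Nat.factorial_succ]; ring

lemma image_card_le {K N r : ℕ} (i : Fin K → Fin N) (h : singleCount i = r) :
    2 * (Finset.univ.image i).card ≤ K + r := by
  classical
  set s := Finset.univ.image i with hs
  have hfib : (Finset.univ : Finset (Fin K)).card = ∑ j ∈ s, occCount i j := by
    apply Finset.card_eq_sum_card_fiberwise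
    intro x _
    exact Finset.mem_image_of_mem i (Finset.mem_univ x)
  have hcard : (Finset.univ : Finset (Fin K)).card = K := by simp
  have hone : ∀ j ∈ s, 1 ≤ occCount i j := by
    intro j hj
    obtain ⟨ν, _, rfl⟩ := Finset.mem_image.mp hj
    have : ν ∈ Finset.univ.filter fun μ : Fin K => i μ = i ν := by simp
    exact Finset.card_pos.mpr ⟨ν, this⟩
  set A := s.filter (fun j => occCount i j = 1) with hA
  have hAr : A.card = r := by
    rw [← h]
    unfold singleCount
    congr 1
    ext j
    simp only [hA, Finset.mem_filter, Finset.mem_univ, true_and, and_iff_right_iff_imp]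
    intro hj
    have hne : (Finset.univ.filter fun ν : Fin K => i ν = j).Nonempty := by
      rw [← Finset.card_pos]
      unfold occCount at hj
      omega
    obtain ⟨ν, hν⟩ := hne
    simp only [Finset.mem_filter] at hν
    exact Finset.mem_image.mpr ⟨ν, Finset.mem_univ ν, hν.2⟩
  have hsplit := Finset.sum_filter_add_sum_filter_not s (fun j => occCount i j = 1)
    (fun j => occCount i j)
  rw [← hA] at hsplit
  have hKsum : K = ∑ j ∈ s, occCount i j := by rw [← hfib]; exact hcard.symm
  have hB2 : ∀ j ∈ s.filter (fun j => ¬ occCount i j = 1), 2 ≤ occCount i j := by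
    intro j hj
    simp only [Finset.mem_filter] at hj
    have := hone j hj.1
    omega
  have hBsum : 2 * (s.filter (fun j => ¬ occCount i j = 1)).card
      ≤ ∑ j ∈ s.filter (fun j => ¬ occCount i j = 1), occCount i j := by
    calc 2 * (s.filter (fun j => ¬ occCount i j = 1)).card
        = ∑ _j ∈ s.filter (fun j => ¬ occCount i j = 1), 2 := by
          rw [Finset.sum_const]; ring
      _ ≤ _ := Finset.sum_le_sum hB2
  have hAsum : ∑ j ∈ A, occCount i j = A.card := by
    rw [Finset.sum_congr rfl (fun j hj => (Finset.mem_filter.mp hj).2), Finset.sum_const,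
      smul_eq_mul, mul_one]
  have hcards : A.card + (s.filter (fun j => ¬ occCount i j = 1)).card = s.card :=
    Finset.card_filter_add_card_filter_not _
  omega

lemma nat_key (K N r m0 : ℕ) (hm0K : m0 ≤ K) (hm0N : m0 ≤ N)
    (himg : ∀ i : Fin K → Fin N, singleCount i = r → (Finset.univ.image i).card ≤ m0) :
    (Finset.univ.filter fun i : Fin K → Fin N => singleCount i = r).card
      ≤ K.factorial * N ^ m0 := by
  classical
  have hsub : (Finset.univ.filter fun i : Fin K → Fin N => singleCount i = r)
      ⊆ (Finset.powersetCard m0 (Finset.univ : Finset (Fin N))).biUnion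
          (fun T => Fintype.piFinset fun _ : Fin K => T) := by
    intro i hi
    simp only [Finset.mem_filter, Finset.mem_univ, true_and] at hi
    obtain ⟨T, hT, hTcard⟩ := Finset.exists_superset_card_eq (himg i hi)
      (by simpa using hm0N)
    refine Finset.mem_biUnion.mpr ⟨T, ?_, ?_⟩
    · exact Finset.mem_powersetCard.mpr ⟨Finset.subset_univ T, hTcard⟩
    · refine Fintype.mem_piFinset.mpr fun ν => hT ?_
      exact Finset.mem_image_of_mem i (Finset.mem_univ ν)
  calc (Finset.univ.filter fun i : Fin K → Fin N => singleCount i = r).card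
      ≤ ((Finset.powersetCard m0 (Finset.univ : Finset (Fin N))).biUnion
          (fun T => Fintype.piFinset fun _ : Fin K => T)).card :=
        Finset.card_le_card hsub
    _ ≤ ∑ T ∈ Finset.powersetCard m0 (Finset.univ : Finset (Fin N)),
          (Fintype.piFinset fun _ : Fin K => T).card := Finset.card_biUnion_le
    _ = ∑ T ∈ Finset.powersetCard m0 (Finset.univ : Finset (Fin N)), m0 ^ K := by
        apply Finset.sum_congr rfl
        intro T hT
        rw [Fintype.card_piFinset_const, (Finset.mem_powersetCard.mp hT).2]
    _ = N.choose m0 * m0 ^ K := by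
        rw [Finset.sum_const, smul_eq_mul, Finset.card_powersetCard, Finset.card_univ,
          Fintype.card_fin]
    _ ≤ N.choose m0 * (K.factorial * m0.factorial) :=
        Nat.mul_le_mul_left _ (pow_le_fact_mul_fact hm0K)
    _ = K.factorial * (m0.factorial * N.choose m0) := by ring
    _ = K.factorial * N.descFactorial m0 := by
        rw [Nat.descFactorial_eq_factorial_mul_choose]
    _ ≤ K.factorial * N ^ m0 :=
        Nat.mul_le_mul_left _ (Nat.descFactorial_le_pow N m0)

/-- Counting bound: the number `w_{K,N}(r)` of multi-indices in `{1,…,N}^K` in which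
exactly `r` distinct index values occur exactly once satisfies
`w_{K,N}(r) ≤ K! · N^{(K+r)/2}`. -/
theorem multiindex_count_bound (K N r : ℕ) (hr : r ≤ K) :
    ((Finset.univ.filter fun i : Fin K → Fin N => singleCount i = r).card : ℝ)
      ≤ (K.factorial : ℝ) * (N : ℝ) ^ (((K : ℝ) + r) / 2) := by
  classical
  rcases Nat.eq_zero_or_pos N with hN | hN
  · subst hN
    rcases Nat.eq_zero_or_pos K with hK | hK
    · subst hK
      interval_cases r
      have hone : ((Finset.univ.filter fun i : Fin 0 → Fin 0 => singleCount i = 0).card : ℝ)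
          ≤ 1 := by
        have := Finset.card_filter_le (Finset.univ : Finset (Fin 0 → Fin 0))
          (fun i => singleCount i = 0)
        have h1 : (Finset.univ : Finset (Fin 0 → Fin 0)).card = 1 := by simp
        exact_mod_cast h1 ▸ this
      refine hone.trans ?_
      norm_num [Real.rpow_zero]
    · have hempty : (Finset.univ : Finset (Fin K → Fin 0)) = ∅ := by
        apply Finset.univ_eq_empty_iff.mpr
        exact ⟨fun f => (f ⟨0, hK⟩).elim0⟩
      rw [Finset.filter_congr_decidable, hempty]
      simp only [Finset.filter_empty, Finset.card_empty, Nat.cast_zero]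
      positivity
  · set m0 := min ((K + r) / 2) N with hm0
    have hm0K : m0 ≤ K := le_trans (min_le_left _ _) (Nat.div_le_of_le_mul (by omega))
    have hm0N : m0 ≤ N := min_le_right _ _
    have himg : ∀ i : Fin K → Fin N, singleCount i = r →
        (Finset.univ.image i).card ≤ m0 := by
      intro i hi
      have h2 := image_card_le i hi
      have h1 : (Finset.univ.image i).card ≤ (K + r) / 2 := by omega
      have hN' : (Finset.univ.image i).card ≤ N := by
        calc (Finset.univ.image i).card ≤ (Finset.univ : Finset (Fin N)).card :=
          Finset.card_le_card (Finset.subset_univ _)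
        _ = N := by simp
      exact le_min h1 hN'
    have key := nat_key K N r m0 hm0K hm0N himg
    have hre : ((K.factorial * N ^ m0 : ℕ) : ℝ)
        ≤ (K.factorial : ℝ) * (N : ℝ) ^ (((K : ℝ) + r) / 2) := by
      push_cast
      rw [← Real.rpow_natCast (N : ℝ) m0]
      apply mul_le_mul_of_nonneg_left _ (by positivity)
      apply Real.rpow_le_rpow_of_exponent_le (by exact_mod_cast hN)
      have h2 : 2 * m0 ≤ K + r := by
        have := Nat.div_mul_le_self (K + r) 2
        have hmle : m0 ≤ (K + r) / 2 := min_le_left _ _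
        omega
      have : (2 : ℝ) * m0 ≤ (K : ℝ) + r := by exact_mod_cast h2
      linarith
    calc ((Finset.univ.filter fun i : Fin K → Fin N => singleCount i = r).card : ℝ)
        ≤ ((K.factorial * N ^ m0 : ℕ) : ℝ) := by exact_mod_cast key
      _ ≤ _ := hre
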